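/- Fix positive integers $I,J,K,L,N$, parameters $U \in \mathbb{R}^{K\times I}$, $V \in \mathbb{R}^{L\times J}$, $B \in \mathbb{R}^{I\times J}$, $C \in \mathbb{R}^{K\times L}$, training data $X_1,\dots,X_N \in \{0,1\}^{I\times J}$, the energy $E(X,Y) = -\mathrm{tr}(U^T Y V X^T) - \mathrm{tr}(X^T B) - \mathrm{tr}(Y^T C)$, and the log-likelihood $\ell = \frac{1}{N}\sum_{n=1}^N \log\big(\sum_{Y} e^{-E(X_n,Y)}\big) - \log\big(\sum_{X',Y'} e^{-E(X',Y')}\big)$ viewed as a function of the weight entry $u_{k_0 i_0}$. Then, with $\sigma$ applied entrywise and $p(X) = \sum_{Y} e^{-E(X,Y)} / \sum_{X',Y'} e^{-E(X',Y')}$ the marginal distribution of the visible matrix, $\frac{\partial \ell}{\partial u_{k_0 i_0}} = \frac{1}{N}\sum_{n=1}^N \big(\sigma(U X_n V^T + C)\, V\, X_n^T\big)_{k_0 i_0} - \sum_{X \in \{0,1\}^{I\times J}} p(X) \big(\sigma(U X V^T + C)\, V\, X^T\big)_{k_0 i_0}$, where $\sigma(x)=1/(1+e^{-x})$. -/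

import Mathlib

open Matrix Finset Real

noncomputable section

/-- Interpret a Boolean matrix as a real 0/1 matrix. -/
def toR {m n : Type*} (b : Matrix m n Bool) : Matrix m n ℝ :=
  Matrix.of fun i j => if b i j then (1 : ℝ) else 0

/-- The sigmoid function `σ(x) = 1/(1+e^{-x})`. -/
def sig (x : ℝ) : ℝ := 1 / (1 + Real.exp (-x))

/-- Entrywise sigmoid of a matrix. -/
def sigM {m n : Type*} (M : Matrix m n ℝ) : Matrix m n ℝ :=
  Matrix.of fun i j => sig (M i j)

/-- The MVRBM energy `E(X,Y;Θ) = -tr(Uᵀ Y V Xᵀ) - tr(Xᵀ B) - tr(Yᵀ C)`. -/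
def mvrbmEnergy {I J K L : ℕ} (U : Matrix (Fin K) (Fin I) ℝ) (V : Matrix (Fin L) (Fin J) ℝ)
    (B : Matrix (Fin I) (Fin J) ℝ) (C : Matrix (Fin K) (Fin L) ℝ)
    (X : Matrix (Fin I) (Fin J) ℝ) (Y : Matrix (Fin K) (Fin L) ℝ) : ℝ :=
  -(Uᵀ * Y * V * Xᵀ).trace - (Xᵀ * B).trace - (Yᵀ * C).trace

lemma sig_mul (x : ℝ) : sig x * (1 + Real.exp x) = Real.exp x := by
  have h : (0:ℝ) < 1 + Real.exp (-x) := by positivity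
  rw [sig, div_mul_eq_mul_div, one_mul, div_eq_iff h.ne']
  rw [mul_add, mul_one, ← Real.exp_add]
  simp [add_comm]

lemma sum_bool_fun {α : Type*} [Fintype α] [DecidableEq α] (g : α → Bool → ℝ) :
    ∑ y : α → Bool, ∏ a, g a (y a) = ∏ a, (g a false + g a true) := by
  classical
  rw [show (∏ a, (g a false + g a true)) = ∏ a, ∑ b : Bool, g a b by simp [add_comm]]
  rw [Finset.prod_univ_sum]
  exact Finset.sum_congr (by ext f; simp [Fintype.mem_piFinset]) fun _ _ => rfl

lemma prod_scale {α : Type*} [Fintype α] [DecidableEq α] (F : α → ℝ) (a₀ : α) (c : ℝ) :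
    ∏ a, (if a = a₀ then c * F a else F a) = c * ∏ a, F a := by
  classical
  have h : ∀ a, (if a = a₀ then c * F a else F a) = (if a = a₀ then c else 1) * F a := by
    intro a; split <;> simp
  simp_rw [h]
  rw [Finset.prod_mul_distrib, Finset.prod_ite_eq' Finset.univ a₀ (fun _ => c)]
  simp

lemma trace_inner {m n : Type*} [Fintype m] [Fintype n] (Y A : Matrix m n ℝ) :
    (Yᵀ * A).trace = ∑ k, ∑ l, Y k l * A k l := by
  rw [Matrix.trace, Finset.sum_comm]
  simp [Matrix.diag, Matrix.mul_apply]

lemma trace_swap {I J K L : ℕ} (U : Matrix (Fin K) (Fin I) ℝ) (V : Matrix (Fin L) (Fin J) ℝ)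
    (X : Matrix (Fin I) (Fin J) ℝ) (Y : Matrix (Fin K) (Fin L) ℝ) :
    (Uᵀ * Y * V * Xᵀ).trace = (Yᵀ * (U * X * Vᵀ)).trace := by
  calc (Uᵀ * Y * V * Xᵀ).trace
      = ((Uᵀ * Y) * (V * Xᵀ)).trace := by rw [Matrix.mul_assoc (Uᵀ * Y) V Xᵀ]
    _ = ((V * Xᵀ) * (Uᵀ * Y)).trace := Matrix.trace_mul_comm _ _
    _ = ((V * Xᵀ * Uᵀ) * Y).trace := by rw [← Matrix.mul_assoc]
    _ = (Yᵀ * (U * X * Vᵀ)).trace := by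
        rw [← Matrix.trace_transpose (Yᵀ * (U * X * Vᵀ))]
        simp only [Matrix.transpose_mul, Matrix.transpose_transpose]
        rw [Matrix.mul_assoc V Xᵀ Uᵀ]

/-- The equivalence between functions on pairs and Boolean matrices. -/
def mEquiv (K L : ℕ) : (Fin K × Fin L → Bool) ≃ Matrix (Fin K) (Fin L) Bool :=
  (Equiv.curry _ _ _).trans (Matrix.of)

/-- energy expansion -/
lemma energy_expand {I J K L : ℕ} (U : Matrix (Fin K) (Fin I) ℝ) (V : Matrix (Fin L) (Fin J) ℝ)
    (B : Matrix (Fin I) (Fin J) ℝ) (C : Matrix (Fin K) (Fin L) ℝ)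
    (X : Matrix (Fin I) (Fin J) Bool) (Y : Matrix (Fin K) (Fin L) Bool) :
    -(mvrbmEnergy U V B C (toR X) (toR Y)) =
      ((toR X)ᵀ * B).trace + ∑ k, ∑ l, toR Y k l * (U * toR X * Vᵀ + C) k l := by
  rw [← trace_inner]
  have h1 : ((toR Y)ᵀ * (U * toR X * Vᵀ + C)).trace
      = ((toR Y)ᵀ * (U * toR X * Vᵀ)).trace + ((toR Y)ᵀ * C).trace := by
    rw [Matrix.mul_add, Matrix.trace_add]
  rw [h1, mvrbmEnergy, trace_swap]
  ring

section LemA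
variable {I J K L : ℕ} (U : Matrix (Fin K) (Fin I) ℝ) (V : Matrix (Fin L) (Fin J) ℝ)
    (B : Matrix (Fin I) (Fin J) ℝ) (C : Matrix (Fin K) (Fin L) ℝ)
    (X : Matrix (Fin I) (Fin J) Bool)

/-- weight factorization -/
lemma weight_eq (Y : Matrix (Fin K) (Fin L) Bool) :
    Real.exp (-(mvrbmEnergy U V B C (toR X) (toR Y))) =
      Real.exp (((toR X)ᵀ * B).trace) *
        ∏ p : Fin K × Fin L,
          (if Y p.1 p.2 then Real.exp ((U * toR X * Vᵀ + C) p.1 p.2) else 1) := by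
  rw [energy_expand, Real.exp_add]
  congr 1
  rw [Fintype.prod_prod_type]
  simp only [Real.exp_sum]
  refine Finset.prod_congr rfl fun k _ => Finset.prod_congr rfl fun l _ => ?_
  by_cases h : Y k l <;> simp [toR, h]

lemma Zx_eq :
    ∑ Y : Matrix (Fin K) (Fin L) Bool, Real.exp (-(mvrbmEnergy U V B C (toR X) (toR Y)))
      = Real.exp (((toR X)ᵀ * B).trace) *
          ∏ p : Fin K × Fin L, (1 + Real.exp ((U * toR X * Vᵀ + C) p.1 p.2)) := by
  simp_rw [weight_eq U V B C X]
  rw [← Finset.mul_sum]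
  congr 1
  rw [← Equiv.sum_comp (mEquiv K L)]
  have h := sum_bool_fun (fun p : Fin K × Fin L => fun b : Bool =>
    if b then Real.exp ((U * toR X * Vᵀ + C) p.1 p.2) else 1)
  simpa [mEquiv] using h

lemma ind_eq (k₀ : Fin K) (l₀ : Fin L) :
    ∑ Y : Matrix (Fin K) (Fin L) Bool,
        toR Y k₀ l₀ * Real.exp (-(mvrbmEnergy U V B C (toR X) (toR Y)))
      = sig ((U * toR X * Vᵀ + C) k₀ l₀) *
          ∑ Y : Matrix (Fin K) (Fin L) Bool,
            Real.exp (-(mvrbmEnergy U V B C (toR X) (toR Y))) := by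
  classical
  have key : ∑ y : Fin K × Fin L → Bool,
      (if y (k₀, l₀) then (1:ℝ) else 0) *
        ∏ p : Fin K × Fin L, (if y p then Real.exp ((U * toR X * Vᵀ + C) p.1 p.2) else 1)
      = sig ((U * toR X * Vᵀ + C) k₀ l₀) * ∏ p : Fin K × Fin L, (1 + Real.exp ((U * toR X * Vᵀ + C) p.1 p.2)) := by
    have step1 : ∀ y : Fin K × Fin L → Bool,
        (if y (k₀, l₀) then (1:ℝ) else 0) *
          ∏ p : Fin K × Fin L, (if y p then Real.exp ((U * toR X * Vᵀ + C) p.1 p.2) else 1)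
        = ∏ p : Fin K × Fin L,
            (if p = (k₀, l₀) then (if y p then Real.exp ((U * toR X * Vᵀ + C) k₀ l₀) else 0)
             else (if y p then Real.exp ((U * toR X * Vᵀ + C) p.1 p.2) else 1)) := by
      intro y
      by_cases h : y (k₀, l₀)
      · rw [if_pos h, one_mul]
        refine Finset.prod_congr rfl fun p _ => ?_
        by_cases hp : p = (k₀, l₀)
        · subst hp; simp [h]
        · simp [hp]
      · rw [if_neg h, zero_mul]
        exact (Finset.prod_eq_zero (Finset.mem_univ (k₀, l₀)) (by simp [h])).symm
    simp_rw [step1]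
    rw [sum_bool_fun (fun (p : Fin K × Fin L) (b : Bool) =>
      if p = (k₀, l₀) then (if b then Real.exp ((U * toR X * Vᵀ + C) k₀ l₀) else 0)
      else (if b then Real.exp ((U * toR X * Vᵀ + C) p.1 p.2) else 1))]
    rw [← prod_scale (fun p : Fin K × Fin L => 1 + Real.exp ((U * toR X * Vᵀ + C) p.1 p.2))
      (k₀, l₀) (sig ((U * toR X * Vᵀ + C) k₀ l₀))]
    refine Finset.prod_congr rfl fun p _ => ?_
    by_cases hp : p = (k₀, l₀)
    · subst hp; simp [sig_mul]
    · simp [hp, add_comm]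
  calc ∑ Y : Matrix (Fin K) (Fin L) Bool,
        toR Y k₀ l₀ * Real.exp (-(mvrbmEnergy U V B C (toR X) (toR Y)))
      = ∑ Y : Matrix (Fin K) (Fin L) Bool,
          Real.exp (((toR X)ᵀ * B).trace) *
            (toR Y k₀ l₀ * ∏ p : Fin K × Fin L,
              (if Y p.1 p.2 then Real.exp ((U * toR X * Vᵀ + C) p.1 p.2) else 1)) := by
        refine Finset.sum_congr rfl fun Y _ => ?_
        rw [weight_eq U V B C X]; ring
    _ = Real.exp (((toR X)ᵀ * B).trace) *
          ∑ Y : Matrix (Fin K) (Fin L) Bool,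
            toR Y k₀ l₀ * ∏ p : Fin K × Fin L,
              (if Y p.1 p.2 then Real.exp ((U * toR X * Vᵀ + C) p.1 p.2) else 1) := by
        rw [← Finset.mul_sum]
    _ = Real.exp (((toR X)ᵀ * B).trace) *
          (sig ((U * toR X * Vᵀ + C) k₀ l₀) * ∏ p : Fin K × Fin L, (1 + Real.exp ((U * toR X * Vᵀ + C) p.1 p.2))) := by
        congr 1
        rw [← Equiv.sum_comp (mEquiv K L) (fun Y : Matrix (Fin K) (Fin L) Bool =>
          toR Y k₀ l₀ * ∏ p : Fin K × Fin L,
            (if Y p.1 p.2 then Real.exp ((U * toR X * Vᵀ + C) p.1 p.2) else 1))]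
        exact key
    _ = sig ((U * toR X * Vᵀ + C) k₀ l₀) *
          (Real.exp (((toR X)ᵀ * B).trace) *
            ∏ p : Fin K × Fin L, (1 + Real.exp ((U * toR X * Vᵀ + C) p.1 p.2))) := by ring
    _ = sig ((U * toR X * Vᵀ + C) k₀ l₀) *
          ∑ Y : Matrix (Fin K) (Fin L) Bool,
            Real.exp (-(mvrbmEnergy U V B C (toR X) (toR Y))) := by
        rw [Zx_eq]

lemma Zx_pos :
    0 < ∑ Y : Matrix (Fin K) (Fin L) Bool,
        Real.exp (-(mvrbmEnergy U V B C (toR X) (toR Y))) :=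
  Finset.sum_pos (fun _ _ => Real.exp_pos _) Finset.univ_nonempty

lemma lemA (k₀ : Fin K) (i₀ : Fin I) :
    ∑ Y : Matrix (Fin K) (Fin L) Bool,
        ((toR Y * V * (toR X)ᵀ) k₀ i₀) * Real.exp (-(mvrbmEnergy U V B C (toR X) (toR Y)))
      = (sigM (U * toR X * Vᵀ + C) * V * (toR X)ᵀ) k₀ i₀ *
          ∑ Y : Matrix (Fin K) (Fin L) Bool,
            Real.exp (-(mvrbmEnergy U V B C (toR X) (toR Y))) := by
  have hc : ∀ Y : Matrix (Fin K) (Fin L) Bool,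
      (toR Y * V * (toR X)ᵀ) k₀ i₀ = ∑ l, toR Y k₀ l * (V * (toR X)ᵀ) l i₀ := by
    intro Y; rw [Matrix.mul_assoc, Matrix.mul_apply]
  have hr : (sigM (U * toR X * Vᵀ + C) * V * (toR X)ᵀ) k₀ i₀
      = ∑ l, sig ((U * toR X * Vᵀ + C) k₀ l) * (V * (toR X)ᵀ) l i₀ := by
    rw [Matrix.mul_assoc, Matrix.mul_apply]; rfl
  rw [hr, Finset.sum_mul]
  simp_rw [hc, Finset.sum_mul]
  rw [Finset.sum_comm]
  refine Finset.sum_congr rfl fun l _ => ?_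
  calc ∑ Y : Matrix (Fin K) (Fin L) Bool,
        toR Y k₀ l * (V * (toR X)ᵀ) l i₀ * Real.exp (-(mvrbmEnergy U V B C (toR X) (toR Y)))
      = (V * (toR X)ᵀ) l i₀ * ∑ Y : Matrix (Fin K) (Fin L) Bool,
          toR Y k₀ l * Real.exp (-(mvrbmEnergy U V B C (toR X) (toR Y))) := by
        rw [Finset.mul_sum]; exact Finset.sum_congr rfl fun Y _ => by ring
    _ = (V * (toR X)ᵀ) l i₀ * (sig ((U * toR X * Vᵀ + C) k₀ l) *
          ∑ Y : Matrix (Fin K) (Fin L) Bool,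
            Real.exp (-(mvrbmEnergy U V B C (toR X) (toR Y)))) := by
        rw [ind_eq U V B C X k₀ l]
    _ = sig ((U * toR X * Vᵀ + C) k₀ l) * (V * (toR X)ᵀ) l i₀ *
          ∑ Y : Matrix (Fin K) (Fin L) Bool,
            Real.exp (-(mvrbmEnergy U V B C (toR X) (toR Y))) := by ring

end LemA

lemma energy_affine {I J K L : ℕ} (U : Matrix (Fin K) (Fin I) ℝ) (V : Matrix (Fin L) (Fin J) ℝ)
    (B : Matrix (Fin I) (Fin J) ℝ) (C : Matrix (Fin K) (Fin L) ℝ)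
    (k₀ : Fin K) (i₀ : Fin I) (Uu : ℝ → Matrix (Fin K) (Fin I) ℝ)
    (hUu : ∀ t, Uu t = Matrix.of fun k i => if k = k₀ ∧ i = i₀ then t else U k i)
    (t : ℝ) (X : Matrix (Fin I) (Fin J) ℝ) (Y : Matrix (Fin K) (Fin L) ℝ) :
    -(mvrbmEnergy (Uu t) V B C X Y) =
      -(mvrbmEnergy U V B C X Y) + (t - U k₀ i₀) * ((Y * V * Xᵀ) k₀ i₀) := by
  have hgroup : ∀ A : Matrix (Fin K) (Fin I) ℝ,
      (Aᵀ * Y * V * Xᵀ).trace = ∑ k, ∑ i, A k i * (Y * (V * Xᵀ)) k i := by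
    intro A
    rw [show Aᵀ * Y * V * Xᵀ = Aᵀ * (Y * (V * Xᵀ)) by simp only [Matrix.mul_assoc]]
    exact trace_inner A (Y * (V * Xᵀ))
  have hW : (Y * V * Xᵀ) k₀ i₀ = (Y * (V * Xᵀ)) k₀ i₀ := by rw [Matrix.mul_assoc]
  have hsum : ∑ k, ∑ i,
        ((Matrix.of fun k i => if k = k₀ ∧ i = i₀ then t else U k i) k i) * (Y * (V * Xᵀ)) k i
      = (∑ k, ∑ i, U k i * (Y * (V * Xᵀ)) k i)
          + (t - U k₀ i₀) * ((Y * (V * Xᵀ)) k₀ i₀) := by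
    have h : ∀ k i, ((Matrix.of fun k i => if k = k₀ ∧ i = i₀ then t else U k i) k i)
          * (Y * (V * Xᵀ)) k i
        = U k i * (Y * (V * Xᵀ)) k i
          + (if i = i₀ then (if k = k₀ then (t - U k₀ i₀) * ((Y * (V * Xᵀ)) k₀ i₀) else 0)
              else 0) := by
      intro k i
      by_cases hk : k = k₀
      · by_cases hi : i = i₀
        · subst hk; subst hi; simp; try ring
        · simp [hi]; try ring
      · simp [hk]; try ring
    simp_rw [h, Finset.sum_add_distrib, Finset.sum_ite_eq' Finset.univ i₀]
    simp
  simp only [mvrbmEnergy]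
  rw [hW, hgroup (Uu t), hgroup U, hUu, hsum]
  ring

/-- the derivative of the log-likelihood with respect to the weight entry
`u_{k₀i₀}` equals
`(1/N) ∑_n (σ(U Xₙ Vᵀ + C) V Xₙᵀ)_{k₀i₀} - ∑_X p(X) (σ(U X Vᵀ + C) V Xᵀ)_{k₀i₀}`. -/
theorem mvrbm_loglik_derivative_U {I J K L N : ℕ}
    (hI : 0 < I) (hJ : 0 < J) (hK : 0 < K) (hL : 0 < L) (hN : 0 < N)
    (U : Matrix (Fin K) (Fin I) ℝ) (V : Matrix (Fin L) (Fin J) ℝ)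
    (B : Matrix (Fin I) (Fin J) ℝ) (C : Matrix (Fin K) (Fin L) ℝ)
    (Xs : Fin N → Matrix (Fin I) (Fin J) Bool) (k₀ : Fin K) (i₀ : Fin I)
    -- `Uu t` is `U` with the single entry `u_{k₀i₀}` replaced by `t`
    (Uu : ℝ → Matrix (Fin K) (Fin I) ℝ)
    (hUu : ∀ t, Uu t = Matrix.of fun k i => if k = k₀ ∧ i = i₀ then t else U k i)
    -- the marginal distribution `p(X)` of the visible matrix
    (p : Matrix (Fin I) (Fin J) Bool → ℝ)
    (hp : ∀ X, p X =
      (∑ Y : Matrix (Fin K) (Fin L) Bool,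
          Real.exp (-(mvrbmEnergy U V B C (toR X) (toR Y)))) /
        ∑ X' : Matrix (Fin I) (Fin J) Bool, ∑ Y' : Matrix (Fin K) (Fin L) Bool,
          Real.exp (-(mvrbmEnergy U V B C (toR X') (toR Y')))) :
    deriv (fun t : ℝ =>
        (1 / (N : ℝ)) * ∑ n : Fin N,
            Real.log (∑ Y : Matrix (Fin K) (Fin L) Bool,
              Real.exp (-(mvrbmEnergy (Uu t) V B C (toR (Xs n)) (toR Y))))
          - Real.log (∑ X' : Matrix (Fin I) (Fin J) Bool,
              ∑ Y' : Matrix (Fin K) (Fin L) Bool,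
                Real.exp (-(mvrbmEnergy (Uu t) V B C (toR X') (toR Y'))))) (U k₀ i₀)
      = (1 / (N : ℝ)) * ∑ n : Fin N,
            (sigM (U * toR (Xs n) * Vᵀ + C) * V * (toR (Xs n))ᵀ) k₀ i₀
        - ∑ X : Matrix (Fin I) (Fin J) Bool,
            p X * (sigM (U * toR X * Vᵀ + C) * V * (toR X)ᵀ) k₀ i₀ := by
  classical
  set t₀ := U k₀ i₀ with ht₀
  have hU0 : Uu t₀ = U := by
    rw [hUu]; ext k i; simp only [Matrix.of_apply]
    split
    · rename_i h; rw [h.1, h.2, ht₀]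
    · rfl
  -- per-visible partition function and its derivative
  have hW : ∀ X : Matrix (Fin I) (Fin J) Bool, HasDerivAt
      (fun t => ∑ Y : Matrix (Fin K) (Fin L) Bool,
        Real.exp (-(mvrbmEnergy (Uu t) V B C (toR X) (toR Y))))
      (∑ Y : Matrix (Fin K) (Fin L) Bool,
        ((toR Y * V * (toR X)ᵀ) k₀ i₀) *
          Real.exp (-(mvrbmEnergy U V B C (toR X) (toR Y)))) t₀ := by
    intro X
    refine HasDerivAt.fun_sum fun Y _ => ?_
    have h1 : HasDerivAt
        (fun t : ℝ => -(mvrbmEnergy U V B C (toR X) (toR Y))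
          + (t - t₀) * ((toR Y * V * (toR X)ᵀ) k₀ i₀))
        ((toR Y * V * (toR X)ᵀ) k₀ i₀) t₀ := by
      simpa using (((hasDerivAt_id t₀).sub_const t₀).mul_const
        ((toR Y * V * (toR X)ᵀ) k₀ i₀)).const_add (-(mvrbmEnergy U V B C (toR X) (toR Y)))
    have h2 := h1.exp
    have hfun : (fun t => Real.exp (-(mvrbmEnergy (Uu t) V B C (toR X) (toR Y))))
        = fun t => Real.exp (-(mvrbmEnergy U V B C (toR X) (toR Y))
            + (t - t₀) * ((toR Y * V * (toR X)ᵀ) k₀ i₀)) :=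
      funext fun t => by rw [energy_affine U V B C k₀ i₀ Uu hUu t]
    rw [hfun]
    simpa [mul_comm] using h2
  have hWpos := fun X : Matrix (Fin I) (Fin J) Bool => Zx_pos U V B C X
  have hZpos : 0 < ∑ X' : Matrix (Fin I) (Fin J) Bool, ∑ Y' : Matrix (Fin K) (Fin L) Bool,
      Real.exp (-(mvrbmEnergy U V B C (toR X') (toR Y'))) :=
    Finset.sum_pos (fun X _ => hWpos X) Finset.univ_nonempty
  -- data-term derivative
  have h1 : HasDerivAt (fun t => ∑ n : Fin N,
      Real.log (∑ Y : Matrix (Fin K) (Fin L) Bool,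
        Real.exp (-(mvrbmEnergy (Uu t) V B C (toR (Xs n)) (toR Y)))))
      (∑ n : Fin N, (sigM (U * toR (Xs n) * Vᵀ + C) * V * (toR (Xs n))ᵀ) k₀ i₀) t₀ := by
    refine HasDerivAt.fun_sum fun n _ => ?_
    have hne : (∑ Y : Matrix (Fin K) (Fin L) Bool,
        Real.exp (-(mvrbmEnergy (Uu t₀) V B C (toR (Xs n)) (toR Y)))) ≠ 0 := by
      rw [hU0]; exact (hWpos (Xs n)).ne'
    have h := (hW (Xs n)).log hne
    rw [hU0] at h
    rwa [lemA U V B C (Xs n) k₀ i₀,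
      mul_div_assoc, div_self (hWpos (Xs n)).ne', mul_one] at h
  -- model-term derivative
  have h2 : HasDerivAt (fun t => Real.log (∑ X' : Matrix (Fin I) (Fin J) Bool,
      ∑ Y' : Matrix (Fin K) (Fin L) Bool,
        Real.exp (-(mvrbmEnergy (Uu t) V B C (toR X') (toR Y')))))
      (∑ X : Matrix (Fin I) (Fin J) Bool,
        p X * (sigM (U * toR X * Vᵀ + C) * V * (toR X)ᵀ) k₀ i₀) t₀ := by
    have hZ : HasDerivAt (fun t => ∑ X' : Matrix (Fin I) (Fin J) Bool,
        ∑ Y' : Matrix (Fin K) (Fin L) Bool,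
          Real.exp (-(mvrbmEnergy (Uu t) V B C (toR X') (toR Y'))))
        (∑ X : Matrix (Fin I) (Fin J) Bool,
          ∑ Y : Matrix (Fin K) (Fin L) Bool,
            ((toR Y * V * (toR X)ᵀ) k₀ i₀) *
              Real.exp (-(mvrbmEnergy U V B C (toR X) (toR Y)))) t₀ :=
      HasDerivAt.fun_sum fun X _ => hW X
    have hne : (∑ X' : Matrix (Fin I) (Fin J) Bool, ∑ Y' : Matrix (Fin K) (Fin L) Bool,
        Real.exp (-(mvrbmEnergy (Uu t₀) V B C (toR X') (toR Y')))) ≠ 0 := by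
      rw [hU0]; exact hZpos.ne'
    have h := hZ.log hne
    rw [hU0] at h
    have hval : (∑ X : Matrix (Fin I) (Fin J) Bool,
          ∑ Y : Matrix (Fin K) (Fin L) Bool,
            ((toR Y * V * (toR X)ᵀ) k₀ i₀) *
              Real.exp (-(mvrbmEnergy U V B C (toR X) (toR Y)))) /
        (∑ X' : Matrix (Fin I) (Fin J) Bool, ∑ Y' : Matrix (Fin K) (Fin L) Bool,
          Real.exp (-(mvrbmEnergy U V B C (toR X') (toR Y'))))
        = ∑ X : Matrix (Fin I) (Fin J) Bool,
            p X * (sigM (U * toR X * Vᵀ + C) * V * (toR X)ᵀ) k₀ i₀ := by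
      rw [Finset.sum_div]
      refine Finset.sum_congr rfl fun X _ => ?_
      rw [lemA U V B C X k₀ i₀, hp X]
      ring
    rwa [hval] at h
  exact ((h1.const_mul ((1:ℝ) / N)).sub h2).deriv
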